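/- Gaussian inputs are asymptotically hardest to estimate: if X is a real random variable with E[|X|^p] ≤ σ^p E[|Z|^p] for Z ~ N(0,1) and p ≥ 1, then for all snr ≥ 0, mmpe(X, snr, p) ≤ ((1 + σ√snr)/√(1 + σ² snr))^p · σ^p E[|Z|^p] / (1 + snr σ²)^{p/2}. -/

import Mathlib

open MeasureTheory ProbabilityTheory

open scoped ENNReal

lemma integrable_abs_rpow_mul_exp_neg_mul_sq {b : ℝ} (hb : 0 < b) {s : ℝ} (hs : -1 < s) :
    Integrable fun x : ℝ => |x| ^ s * Real.exp (-b * x ^ 2) := by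
  have hf : IntegrableOn (fun x : ℝ => |x| ^ s * Real.exp (-b * x ^ 2)) (Set.Ioi 0) := by
    refine (integrableOn_rpow_mul_exp_neg_mul_sq hb hs).congr_fun ?_ measurableSet_Ioi
    intro x hx
    simp only [abs_of_pos (show (0:ℝ) < x from hx)]
  have int_Iic : IntegrableOn (fun x : ℝ => |x| ^ s * Real.exp (-b * x ^ 2)) (Set.Iic 0) := by
    rw [← Measure.map_neg_eq_self (volume : Measure ℝ)]
    have m : MeasurableEmbedding fun x : ℝ => -x := (Homeomorph.neg ℝ).measurableEmbedding
    rw [m.integrableOn_map_iff]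
    simp_rw [Function.comp_def, abs_neg, neg_sq, Set.neg_preimage, Set.neg_Iic, neg_zero]
    exact (integrableOn_Ici_iff_integrableOn_Ioi).mpr hf
  rw [← integrableOn_univ, ← Set.Iic_union_Ioi (a := (0:ℝ)), integrableOn_union]
  exact ⟨int_Iic, hf⟩

lemma integrable_abs_rpow_gaussian {p : ℝ} (hp : 0 ≤ p) :
    Integrable (fun z : ℝ => |z| ^ p) (gaussianReal 0 1) := by
  rw [gaussianReal_of_var_ne_zero 0 one_ne_zero,
    integrable_withDensity_iff (measurable_gaussianPDF 0 1)
      (Filter.Eventually.of_forall fun x => ENNReal.ofReal_lt_top)]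
  have heq : (fun x : ℝ => |x| ^ p * (gaussianPDF 0 1 x).toReal)
      = fun x : ℝ => (Real.sqrt (2 * Real.pi))⁻¹ * (|x| ^ p * Real.exp (-(1/2) * x ^ 2)) := by
    funext x
    rw [gaussianPDF, ENNReal.toReal_ofReal (gaussianPDFReal_nonneg 0 1 x), gaussianPDFReal]
    push_cast
    ring_nf
  rw [heq]
  exact (integrable_abs_rpow_mul_exp_neg_mul_sq (by norm_num) (by linarith)).const_mul _

/-- **Gaussian inputs are asymptotically the hardest to estimate.**
If `E[|X|^p] ≤ σ^p E[|Z|^p]` with `Z ~ N(0,1)` and `p ≥ 1`, then for all `snr ≥ 0`,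
`mmpe(X, snr, p) ≤ ((1 + σ√snr)/√(1 + σ²snr))^p · σ^p E[|Z|^p] / (1 + snr σ²)^(p/2)`. -/
theorem mmpe_gaussian_hardest
    {Ω : Type*} [MeasurableSpace Ω] (μ : Measure Ω) [IsProbabilityMeasure μ]
    (X Z : Ω → ℝ) (hX : Measurable X) (hZ : Measurable Z)
    (hZlaw : μ.map Z = gaussianReal 0 1) (hindep : IndepFun X Z μ)
    (p : ℝ) (hp : 1 ≤ p) (σ : ℝ) (hσ : 0 ≤ σ)
    (hXp : Integrable (fun ω => |X ω| ^ p) μ)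
    (hmom : ∫ ω, |X ω| ^ p ∂μ ≤ σ ^ p * ∫ z, |z| ^ p ∂(gaussianReal 0 1))
    (snr : ℝ) (hsnr : 0 ≤ snr) :
    (⨅ f : {f : ℝ → ℝ // Measurable f},
        ∫⁻ ω, (‖X ω - f.1 (Real.sqrt snr * X ω + Z ω)‖₊ : ENNReal) ^ p ∂μ)
      ≤ ENNReal.ofReal
          (((1 + σ * Real.sqrt snr) / Real.sqrt (1 + σ ^ 2 * snr)) ^ p *
            σ ^ p * (∫ z, |z| ^ p ∂(gaussianReal 0 1)) / (1 + snr * σ ^ 2) ^ (p / 2)) := by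
  have hp0 : (0:ℝ) < p := lt_of_lt_of_le one_pos hp
  set M : ℝ := ∫ z, |z| ^ p ∂(gaussianReal 0 1) with hMdef
  have hM0 : 0 ≤ M := integral_nonneg fun z => Real.rpow_nonneg (abs_nonneg _) _
  set D : ℝ := 1 + σ ^ 2 * snr with hDdef
  have hD : (0:ℝ) < D := by positivity
  set a : ℝ := σ ^ 2 * Real.sqrt snr / D with hadef
  have hsq : 0 ≤ Real.sqrt snr := Real.sqrt_nonneg _
  have ha : 0 ≤ a := by positivity
  -- the chosen linear estimator
  have hfmeas : Measurable fun y : ℝ => a * y := measurable_id.const_mul a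
  refine le_trans (iInf_le _ ⟨fun y => a * y, hfmeas⟩) ?_
  -- rewrite the error as a linear combination
  have key : ∀ ω, X ω - a * (Real.sqrt snr * X ω + Z ω)
      = (1 / D) * X ω + (-a) * Z ω := by
    intro ω
    have hss : Real.sqrt snr ^ 2 = snr := Real.sq_sqrt hsnr
    rw [hadef, hDdef]
    field_simp
    linear_combination (-(X ω * σ ^ 2)) * hss
  set g : Ω → ℝ := fun ω => (1 / D) * X ω + (-a) * Z ω with hgdef
  have hstep : (∫⁻ ω, (‖X ω - a * (Real.sqrt snr * X ω + Z ω)‖₊ : ℝ≥0∞) ^ p ∂μ)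
      = ∫⁻ ω, (‖g ω‖₊ : ℝ≥0∞) ^ p ∂μ := by
    refine lintegral_congr fun ω => ?_
    rw [key ω]
  rw [hstep]
  -- set up eLpNorm
  set P : ℝ≥0∞ := ENNReal.ofReal p with hPdef
  have hP0 : P ≠ 0 := by simp [hPdef, ENNReal.ofReal_eq_zero, not_le, hp0]
  have hPtop : P ≠ ∞ := ENNReal.ofReal_ne_top
  have hPreal : P.toReal = p := ENNReal.toReal_ofReal hp0.le
  have h1P : 1 ≤ P := by
    rw [hPdef, ← ENNReal.ofReal_one]
    exact ENNReal.ofReal_le_ofReal hp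
  have hlint_eq : ∀ (h : Ω → ℝ), (∫⁻ ω, (‖h ω‖₊ : ℝ≥0∞) ^ p ∂μ) = (eLpNorm h P μ) ^ p := by
    intro h
    rw [eLpNorm_eq_lintegral_rpow_enorm_toReal hP0 hPtop, hPreal, ← ENNReal.rpow_mul, one_div,
      inv_mul_cancel₀ hp0.ne', ENNReal.rpow_one]
    rfl
  -- bound eLpNorm of X
  have hXnn : ∀ (W : Ω → ℝ), (∫⁻ ω, (‖W ω‖₊ : ℝ≥0∞) ^ p ∂μ)
      = ∫⁻ ω, ENNReal.ofReal (|W ω| ^ p) ∂μ := by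
    intro W
    refine lintegral_congr fun ω => ?_
    rw [← enorm_eq_nnnorm, Real.enorm_eq_ofReal_abs, ENNReal.ofReal_rpow_of_nonneg (abs_nonneg _) hp0.le]
  have hXlint : (∫⁻ ω, (‖X ω‖₊ : ℝ≥0∞) ^ p ∂μ) = ENNReal.ofReal (∫ ω, |X ω| ^ p ∂μ) := by
    rw [hXnn X, ← ofReal_integral_eq_lintegral_ofReal hXp
      (Filter.Eventually.of_forall fun ω => Real.rpow_nonneg (abs_nonneg _) _)]
  have heX : eLpNorm X P μ ≤ ENNReal.ofReal (σ * M ^ (1 / p)) := by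
    rw [eLpNorm_eq_lintegral_rpow_enorm_toReal hP0 hPtop, hPreal, show (∫⁻ ω, ‖X ω‖ₑ ^ p ∂μ) = ENNReal.ofReal (∫ ω, |X ω| ^ p ∂μ) from hXlint]
    calc (ENNReal.ofReal (∫ ω, |X ω| ^ p ∂μ)) ^ (1 / p)
        ≤ (ENNReal.ofReal (σ ^ p * M)) ^ (1 / p) :=
          ENNReal.rpow_le_rpow (ENNReal.ofReal_le_ofReal hmom) (by positivity)
      _ = ENNReal.ofReal ((σ ^ p * M) ^ (1 / p)) := by
          rw [ENNReal.ofReal_rpow_of_nonneg (by positivity) (by positivity)]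
      _ = ENNReal.ofReal (σ * M ^ (1 / p)) := by
          rw [Real.mul_rpow (by positivity) hM0, ← Real.rpow_mul hσ,
            mul_one_div_cancel hp0.ne', Real.rpow_one]
  -- eLpNorm of Z
  have hZint : Integrable (fun z : ℝ => |z| ^ p) (gaussianReal 0 1) :=
    integrable_abs_rpow_gaussian hp0.le
  have hZlint : (∫⁻ ω, (‖Z ω‖₊ : ℝ≥0∞) ^ p ∂μ) = ENNReal.ofReal M := by
    rw [hXnn Z]
    have : (∫⁻ ω, ENNReal.ofReal (|Z ω| ^ p) ∂μ)
        = ∫⁻ z, ENNReal.ofReal (|z| ^ p) ∂(μ.map Z) := by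
      rw [lintegral_map (by fun_prop) hZ]
    rw [this, hZlaw, ← ofReal_integral_eq_lintegral_ofReal hZint
      (Filter.Eventually.of_forall fun z => Real.rpow_nonneg (abs_nonneg _) _)]
  have heZ : eLpNorm Z P μ = ENNReal.ofReal (M ^ (1 / p)) := by
    rw [eLpNorm_eq_lintegral_rpow_enorm_toReal hP0 hPtop, hPreal, show (∫⁻ ω, ‖Z ω‖ₑ ^ p ∂μ) = ENNReal.ofReal M from hZlint,
      ENNReal.ofReal_rpow_of_nonneg hM0 (by positivity)]
  -- triangle inequality
  have hdecomp : g = (fun ω => (1 / D) • X ω) + (fun ω => (-a) • Z ω) := rfl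
  have htriangle : eLpNorm g P μ
      ≤ ENNReal.ofReal (1 / D) * eLpNorm X P μ + ENNReal.ofReal a * eLpNorm Z P μ := by
    calc eLpNorm g P μ
        ≤ eLpNorm (fun ω => (1 / D) • X ω) P μ + eLpNorm (fun ω => (-a) • Z ω) P μ := by
          rw [hdecomp]
          exact eLpNorm_add_le ((hX.const_smul (1/D : ℝ)).aestronglyMeasurable)
            ((hZ.const_smul (-a : ℝ)).aestronglyMeasurable) h1P
      _ = (‖(1/D : ℝ)‖₊ : ℝ≥0∞) * eLpNorm X P μ + (‖(-a : ℝ)‖₊ : ℝ≥0∞) * eLpNorm Z P μ := by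
          rw [show (fun ω => (1 / D) • X ω) = (1/D : ℝ) • X from rfl,
            show (fun ω => (-a) • Z ω) = (-a : ℝ) • Z from rfl,
            eLpNorm_const_smul, eLpNorm_const_smul]
          rfl
      _ = ENNReal.ofReal (1 / D) * eLpNorm X P μ + ENNReal.ofReal a * eLpNorm Z P μ := by
          rw [← enorm_eq_nnnorm, ← enorm_eq_nnnorm, Real.enorm_eq_ofReal_abs, Real.enorm_eq_ofReal_abs, abs_neg,
            abs_of_nonneg ha, abs_of_nonneg (by positivity : (0:ℝ) ≤ 1/D)]
  -- combine
  have hbound : eLpNorm g P μ ≤ ENNReal.ofReal ((σ / D + a) * M ^ (1 / p)) := by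
    refine htriangle.trans ?_
    calc ENNReal.ofReal (1 / D) * eLpNorm X P μ + ENNReal.ofReal a * eLpNorm Z P μ
        ≤ ENNReal.ofReal (1 / D) * ENNReal.ofReal (σ * M ^ (1 / p))
          + ENNReal.ofReal a * ENNReal.ofReal (M ^ (1 / p)) := by
          exact add_le_add (mul_le_mul_right heX _) (mul_le_mul_right heZ.le _)
      _ = ENNReal.ofReal ((σ / D + a) * M ^ (1 / p)) := by
          rw [← ENNReal.ofReal_mul (by positivity), ← ENNReal.ofReal_mul ha,
            ← ENNReal.ofReal_add (by positivity) (by positivity)]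
          ring_nf
  -- final reduction
  rw [hlint_eq g]
  have hDp2 : (0:ℝ) < D ^ (p/2) := Real.rpow_pos_of_pos hD _
  have h3 : (0:ℝ) ≤ 1 + σ * Real.sqrt snr := by positivity
  have e1 : Real.sqrt D ^ p = D ^ (p/2) := by
    rw [Real.sqrt_eq_rpow, ← Real.rpow_mul hD.le]
    ring_nf
  have e2 : D ^ (p/2) * D ^ (p/2) = D ^ p := by
    rw [← Real.rpow_add hD]; ring_nf
  have h2 : σ / D + a = σ * (1 + σ * Real.sqrt snr) / D := by
    rw [hadef]; field_simp
  have hD2 : (1 + snr * σ ^ 2 : ℝ) = D := by rw [hDdef]; ring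
  calc (eLpNorm g P μ) ^ p
      ≤ (ENNReal.ofReal ((σ / D + a) * M ^ (1 / p))) ^ p :=
        ENNReal.rpow_le_rpow hbound hp0.le
    _ = ENNReal.ofReal (((σ / D + a) * M ^ (1 / p)) ^ p) := by
        rw [ENNReal.ofReal_rpow_of_nonneg (by positivity) hp0.le]
    _ = ENNReal.ofReal
          (((1 + σ * Real.sqrt snr) / Real.sqrt D) ^ p *
            σ ^ p * M / (1 + snr * σ ^ 2) ^ (p / 2)) := by
        congr 1
        rw [Real.mul_rpow (by positivity) (by positivity), ← Real.rpow_mul hM0,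
          one_div_mul_cancel hp0.ne', Real.rpow_one, h2, hD2,
          Real.div_rpow (by positivity) hD.le, Real.mul_rpow hσ h3,
          Real.div_rpow h3 (Real.sqrt_nonneg _), e1, ← e2]
        field_simp
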